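/- The interleaving distance d_I^F between filtered simplicial complexes satisfies the triangle inequality: if X^* and Y^* are ε-interleaved and Y^* and Z^* are ε'-interleaved, then X^* and Z^* are (ε + ε')-interleaved. -/

import Mathlib

open Finset Function

noncomputable section
open scoped Classical

variable {V W U : Type} [Fintype V] [Fintype W] [Fintype U]

/-- A size function is monotone on nonempty subsets. -/
def Monot (D : Finset V → ℝ) : Prop :=
  ∀ ⦃α β : Finset V⦄, α.Nonempty → α ⊆ β → D α ≤ D β

/-- `max 0 (sup over nonempty subsets of the vertex set of g)`. -/
def supSub (g : Finset V → ℝ) : ℝ :=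
  ((Finset.univ : Finset V).powerset.filter Finset.Nonempty).fold max 0 g

/-- Degree of a morphism: least `r ≥ 0` with `D_Y (f α) ≤ D_X α + r` for all nonempty `α`. -/
def degF (DX : Finset V → ℝ) (DY : Finset W → ℝ) (f : V → W) : ℝ :=
  supSub fun α => DY (α.image f) - DX α

/-- Codegree: least `r ≥ 0` with `D_Y (f α ∪ g α) ≤ D_X α + r` for all nonempty `α`. -/
def codegF (DX : Finset V → ℝ) (DY : Finset W → ℝ) (f g : V → W) : ℝ :=
  supSub fun α => DY (α.image f ∪ α.image g) - DX α

/-- `codeg^∞`: minimum over chains `f = F 0, …, F n = g` of the max codegree of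
consecutive terms. -/
def codegInfF (DX : Finset V → ℝ) (DY : Finset W → ℝ) (f g : V → W) : ℝ :=
  sInf { c : ℝ | ∃ n : ℕ, 0 < n ∧ ∃ F : ℕ → V → W, F 0 = f ∧ F n = g ∧
    c = (Finset.range n).fold max 0 fun i => codegF DX DY (F i) (F (i + 1)) }

/-- `(f, g)` is an `ε`-interleaving between the filtered complexes given by `DX`, `DY`. -/
def IsInterleaving (DX : Finset V → ℝ) (DY : Finset W → ℝ)
    (f : V → W) (g : W → V) (ε : ℝ) : Prop :=
  degF DX DY f ≤ ε ∧ degF DY DX g ≤ ε ∧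
  codegInfF DX DX (g ∘ f) id ≤ 2 * ε ∧ codegInfF DY DY (f ∘ g) id ≤ 2 * ε

/-- The interleaving distance between filtered simplicial complexes. -/
def dIF (DX : Finset V → ℝ) (DY : Finset W → ℝ) : ℝ :=
  sInf { ε : ℝ | 0 ≤ ε ∧ ∃ f g, IsInterleaving DX DY f g ε }

/-- The vertex quasi-distance `δ_X(v,w)`. -/
def vqd (D : Finset V → ℝ) (v w : V) : ℝ :=
  supSub fun α => D (insert w α) - D (insert v α)

/-- Distortion of a correspondence `R ⊆ V × W`, viewed as a tripod via the projections. -/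
def corDis (DX : Finset V → ℝ) (DY : Finset W → ℝ) (R : Finset (V × W)) : ℝ :=
  (R.powerset.filter Finset.Nonempty).fold max 0 fun α =>
    |DX (α.image Prod.fst) - DY (α.image Prod.snd)|

/-- Gromov–Hausdorff distance (via correspondences). -/
def dGHcor (DX : Finset V → ℝ) (DY : Finset W → ℝ) : ℝ :=
  (1 / 2) * sInf { c : ℝ | ∃ R : Finset (V × W),
    (∀ v : V, ∃ w, (v, w) ∈ R) ∧ (∀ w : W, ∃ v, (v, w) ∈ R) ∧ c = corDis DX DY R }

/-- Distortion of a tripod `(Z, p, q)`. -/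
def trdis (DX : Finset V → ℝ) (DY : Finset W → ℝ) {Z : Type} [Fintype Z]
    (p : Z → V) (q : Z → W) : ℝ :=
  supSub fun α : Finset Z => |DX (α.image p) - DY (α.image q)|

/-- Gromov–Hausdorff distance between filtered simplicial complexes (via tripods). -/
def dGHtri (DX : Finset V → ℝ) (DY : Finset W → ℝ) : ℝ :=
  (1 / 2) * sInf { c : ℝ | ∃ (Z : Type) (_i : Fintype Z) (p : Z → V) (q : Z → W),
    Surjective p ∧ Surjective q ∧ c = trdis DX DY p q }

/-- Diameter of a finite subset of a metric space. -/
def fdiam {M : Type} [MetricSpace M] (σ : Finset M) : ℝ :=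
  (σ ×ˢ σ).fold max 0 fun p => dist p.1 p.2

/-- Metric distortion of a correspondence between metric spaces. -/
def metDis {M N : Type} [MetricSpace M] [MetricSpace N] (R : Finset (M × N)) : ℝ :=
  (R ×ˢ R).fold max 0 fun p => |dist p.1.1 p.2.1 - dist p.1.2 p.2.2|

/-- Gromov–Hausdorff distance between finite metric spaces. -/
def dGHmet (M N : Type) [MetricSpace M] [MetricSpace N] : ℝ :=
  (1 / 2) * sInf { c : ℝ | ∃ R : Finset (M × N),
    (∀ x : M, ∃ y, (x, y) ∈ R) ∧ (∀ y : N, ∃ x, (x, y) ∈ R) ∧ c = metDis R }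



section Aux

lemma supSub_nonneg (gf : Finset V → ℝ) : 0 ≤ supSub gf :=
  (Finset.le_fold_max _).2 (Or.inl le_rfl)

lemma le_supSub (gf : Finset V → ℝ) {α : Finset V} (hα : α.Nonempty) : gf α ≤ supSub gf :=
  (Finset.le_fold_max _).2 (Or.inr ⟨α, by simp [hα], le_rfl⟩)

lemma supSub_le {gf : Finset V → ℝ} {r : ℝ} (h0 : 0 ≤ r)
    (h : ∀ α : Finset V, α.Nonempty → gf α ≤ r) : supSub gf ≤ r :=
  (Finset.fold_max_le _).2 ⟨h0, fun α hα => h α (Finset.mem_filter.1 hα).2⟩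

lemma degF_spec {DX : Finset V → ℝ} {DY : Finset W → ℝ} {f : V → W} {ε : ℝ}
    (h : degF DX DY f ≤ ε) {α : Finset V} (hα : α.Nonempty) :
    DY (α.image f) ≤ DX α + ε := by
  have h1 := le_supSub (fun α => DY (α.image f) - DX α) hα
  linarith [h1.trans h]

lemma codegF_spec {DX : Finset V → ℝ} {DY : Finset W → ℝ} {f g : V → W} {r : ℝ}
    (h : codegF DX DY f g ≤ r) {α : Finset V} (hα : α.Nonempty) :
    DY (α.image f ∪ α.image g) ≤ DX α + r := by
  have h1 := le_supSub (fun α => DY (α.image f ∪ α.image g) - DX α) hα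
  linarith [h1.trans h]

lemma codegF_le {DX : Finset V → ℝ} {DY : Finset W → ℝ} {f g : V → W} {r : ℝ} (h0 : 0 ≤ r)
    (h : ∀ α : Finset V, α.Nonempty → DY (α.image f ∪ α.image g) ≤ DX α + r) :
    codegF DX DY f g ≤ r :=
  supSub_le h0 fun α hα => by linarith [h α hα]

lemma codegInf_set_nonempty (DX : Finset V → ℝ) (DY : Finset W → ℝ) (f g : V → W) :
    { c : ℝ | ∃ n : ℕ, 0 < n ∧ ∃ F : ℕ → V → W, F 0 = f ∧ F n = g ∧
      c = (Finset.range n).fold max 0 fun i => codegF DX DY (F i) (F (i + 1)) }.Nonempty :=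
  ⟨_, 1, one_pos, fun i => if i = 0 then f else g, by simp, by simp, rfl⟩

lemma codegInf_set_bddBelow (DX : Finset V → ℝ) (DY : Finset W → ℝ) (f g : V → W) :
    BddBelow { c : ℝ | ∃ n : ℕ, 0 < n ∧ ∃ F : ℕ → V → W, F 0 = f ∧ F n = g ∧
      c = (Finset.range n).fold max 0 fun i => codegF DX DY (F i) (F (i + 1)) } := by
  refine ⟨0, fun c hc => ?_⟩
  obtain ⟨n, hn, F, h0, hn', rfl⟩ := hc
  exact (Finset.le_fold_max _).2 (Or.inl le_rfl)

lemma codegInfF_nonneg (DX : Finset V → ℝ) (DY : Finset W → ℝ) (f g : V → W) :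
    0 ≤ codegInfF DX DY f g := by
  refine le_csInf (codegInf_set_nonempty DX DY f g) fun c hc => ?_
  obtain ⟨n, hn, F, h0, hn', rfl⟩ := hc
  exact (Finset.le_fold_max _).2 (Or.inl le_rfl)

lemma codegInfF_le_chain {DX : Finset V → ℝ} {DY : Finset W → ℝ} {f g : V → W}
    (n : ℕ) (hn : 0 < n) (F : ℕ → V → W) (hF0 : F 0 = f) (hFn : F n = g) {r : ℝ}
    (h0 : 0 ≤ r) (h : ∀ i < n, codegF DX DY (F i) (F (i + 1)) ≤ r) :
    codegInfF DX DY f g ≤ r := by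
  refine le_trans (csInf_le (codegInf_set_bddBelow DX DY f g) ⟨n, hn, F, hF0, hFn, rfl⟩) ?_
  exact (Finset.fold_max_le _).2 ⟨h0, fun i hi => h i (Finset.mem_range.1 hi)⟩

lemma exists_chain_of_codegInfF_le {DX : Finset V → ℝ} {DY : Finset W → ℝ} {f g : V → W}
    {r : ℝ} (h : codegInfF DX DY f g ≤ r) {δ : ℝ} (hδ : 0 < δ) :
    ∃ n, 0 < n ∧ ∃ F : ℕ → V → W, F 0 = f ∧ F n = g ∧
      ∀ i < n, codegF DX DY (F i) (F (i + 1)) ≤ r + δ := by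
  have hlt : codegInfF DX DY f g < r + δ := lt_of_le_of_lt h (by linarith)
  obtain ⟨c, hc, hcl⟩ := exists_lt_of_csInf_lt (codegInf_set_nonempty DX DY f g) hlt
  obtain ⟨n, hn, F, h0, hn', rfl⟩ := hc
  refine ⟨n, hn, F, h0, hn', fun i hi => ?_⟩
  exact le_trans ((Finset.le_fold_max _).2 (Or.inr ⟨i, Finset.mem_range.2 hi, le_rfl⟩)) hcl.le

lemma degF_comp {A B C : Type} [Fintype A] [Fintype B] [Fintype C]
    (DA : Finset A → ℝ) (DB : Finset B → ℝ) (DC : Finset C → ℝ)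
    {u : A → B} {w : B → C} {a b : ℝ}
    (hu : degF DA DB u ≤ a) (hw : degF DB DC w ≤ b) :
    degF DA DC (w ∘ u) ≤ a + b := by
  have ha : 0 ≤ a := le_trans (supSub_nonneg _) hu
  have hb : 0 ≤ b := le_trans (supSub_nonneg _) hw
  refine supSub_le (by linarith) fun α hα => ?_
  rw [sub_le_iff_le_add]
  have h1 : α.image (w ∘ u) = (α.image u).image w := (Finset.image_image).symm
  rw [h1]
  have h2 := degF_spec hw (hα.image u)
  have h3 := degF_spec hu hα
  linarith

lemma codegF_conj {A B : Type} [Fintype A] [Fintype B]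
    (DA : Finset A → ℝ) (DB : Finset B → ℝ) {u : A → B} {v : B → A} {p q : B → B}
    {a b c : ℝ} (hu : degF DA DB u ≤ a) (hv : degF DB DA v ≤ b)
    (hpq : codegF DB DB p q ≤ c) :
    codegF DA DA (v ∘ p ∘ u) (v ∘ q ∘ u) ≤ a + b + c := by
  have ha : 0 ≤ a := le_trans (supSub_nonneg _) hu
  have hb : 0 ≤ b := le_trans (supSub_nonneg _) hv
  have hc : 0 ≤ c := le_trans (supSub_nonneg _) hpq
  refine codegF_le (by linarith) fun α hα => ?_
  have key : α.image (v ∘ p ∘ u) ∪ α.image (v ∘ q ∘ u)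
      = ((α.image u).image p ∪ (α.image u).image q).image v := by
    ext x
    simp only [Finset.mem_union, Finset.mem_image, Function.comp_apply]
    aesop
  rw [key]
  have hS : ((α.image u).image p ∪ (α.image u).image q).Nonempty := by
    obtain ⟨x, hx⟩ := (hα.image u).image p
    exact ⟨x, Finset.mem_union_left _ hx⟩
  have h2 := degF_spec hv hS
  have h3 := codegF_spec hpq (hα.image u)
  have h4 := degF_spec hu hα
  linarith

lemma codegInfF_triangle {A B : Type} [Fintype A] [Fintype B]
    (DA : Finset A → ℝ) (DB : Finset B → ℝ) {u : A → B} {v : B → A} {h : B → B}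
    {a b c d : ℝ} (hu : degF DA DB u ≤ a) (hv : degF DB DA v ≤ b)
    (hh : codegInfF DB DB h id ≤ c) (hvu : codegInfF DA DA (v ∘ u) id ≤ d) :
    codegInfF DA DA (v ∘ h ∘ u) id ≤ max (a + b + c) d := by
  have hd0 : 0 ≤ d := le_trans (codegInfF_nonneg _ _ _ _) hvu
  refine le_of_forall_pos_le_add fun δ hδ => ?_
  obtain ⟨m, hm, G, hG0, hGm, hG⟩ := exists_chain_of_codegInfF_le hh hδ
  obtain ⟨n, hn, F, hF0, hFn, hF⟩ := exists_chain_of_codegInfF_le hvu hδ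
  set M := max (a + b + c) d with hM
  have hM0 : 0 ≤ M + δ := by
    have := le_max_right (a + b + c) d
    linarith
  refine codegInfF_le_chain (m + n) (by omega)
    (fun j => if j < m then v ∘ G j ∘ u else F (j - m)) ?_ ?_ hM0 ?_
  · simp [hm, hG0]
  · show (if m + n < m then v ∘ G (m + n) ∘ u else F (m + n - m)) = id
    rw [if_neg (by omega), Nat.add_sub_cancel_left, hFn]
  · intro i hi
    have hmax1 : a + b + c ≤ M := le_max_left _ _
    have hmax2 : d ≤ M := le_max_right _ _
    show codegF DA DA (if i < m then v ∘ G i ∘ u else F (i - m))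
      (if i + 1 < m then v ∘ G (i + 1) ∘ u else F (i + 1 - m)) ≤ M + δ
    by_cases h1 : i + 1 < m
    · have h2 : i < m := by omega
      rw [if_pos h2, if_pos h1]
      have := codegF_conj DA DB hu hv (hG i (by omega))
      linarith
    · by_cases h2 : i < m
      · have him : i + 1 = m := by omega
        rw [if_pos h2, if_neg h1]
        have heq : F (i + 1 - m) = v ∘ G (i + 1) ∘ u := by
          rw [him, Nat.sub_self, hF0, hGm]
          ext x; simp
        rw [heq]
        have := codegF_conj DA DB hu hv (hG i (by omega))
        linarith
      · rw [if_neg h2, if_neg h1]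
        have heq : i + 1 - m = (i - m) + 1 := by omega
        rw [heq]
        have := hF (i - m) (by omega)
        linarith

end Aux

/-- triangle inequality for `d_I^F`: if `X^*, Y^*` are `ε`-interleaved and
`Y^*, Z^*` are `ε'`-interleaved, then `X^*, Z^*` are `(ε + ε')`-interleaved. -/
theorem stmt_10 (DX : Finset V → ℝ) (DY : Finset W → ℝ) (DZ : Finset U → ℝ)
    (hX : Monot DX) (hY : Monot DY) (hZ : Monot DZ)
    (ε ε' : ℝ) (f : V → W) (g : W → V) (f' : W → U) (g' : U → W)
    (h1 : IsInterleaving DX DY f g ε) (h2 : IsInterleaving DY DZ f' g' ε') :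
    ∃ (F : V → U) (G : U → V), IsInterleaving DX DZ F G (ε + ε') := by
  obtain ⟨hdf, hdg, hcX, hcY⟩ := h1
  obtain ⟨hdf', hdg', hcY', hcZ⟩ := h2
  have hε : 0 ≤ ε := le_trans (supSub_nonneg _) hdf
  have hε' : 0 ≤ ε' := le_trans (supSub_nonneg _) hdf'
  refine ⟨f' ∘ f, g ∘ g', degF_comp DX DY DZ hdf hdf', le_trans (degF_comp DZ DY DX hdg' hdg) (by linarith), ?_, ?_⟩
  · have key := codegInfF_triangle DX DY (u := f) (v := g) (h := g' ∘ f') hdf hdg hcY' hcX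
    have heq : codegInfF DX DX ((g ∘ g') ∘ f' ∘ f) id
        = codegInfF DX DX (g ∘ (g' ∘ f') ∘ f) id := rfl
    rw [heq]
    refine le_trans key (max_le (by linarith) (by linarith))
  · have key := codegInfF_triangle DZ DY (u := g') (v := f') (h := f ∘ g) hdg' hdf' hcY hcZ
    have heq : codegInfF DZ DZ ((f' ∘ f) ∘ g ∘ g') id
        = codegInfF DZ DZ (f' ∘ (f ∘ g) ∘ g') id := rfl
    rw [heq]
    refine le_trans key (max_le (by linarith) (by linarith))
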